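/- For positive definite Hermitian n×n matrices A and B, tr(A⁻¹B) ≤ n · (det B / det A) · (tr(B⁻¹A))^{n-1}. -/

import Mathlib

open scoped ComplexOrder
open Matrix Finset
open scoped MatrixOrder

lemma key_sum_le {n : ℕ} (f : Fin n → ℝ) (hf : ∀ i, 0 < f i) :
    ∑ i, f i ≤ (n : ℝ) * (∏ i, f i) * (∑ i, (f i)⁻¹) ^ (n - 1) := by
  have hinv : ∀ j : Fin n, (0:ℝ) ≤ (f j)⁻¹ := fun j => (inv_nonneg).2 (hf j).le
  have hstep : ∀ i : Fin n, f i ≤ (∏ j, f j) * (∑ j, (f j)⁻¹) ^ (n - 1) := by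
    intro i
    have h1 : ∏ j ∈ (univ : Finset (Fin n)).erase i, (f j)⁻¹
        ≤ (∑ j, (f j)⁻¹) ^ (n - 1) := by
      calc ∏ j ∈ (univ : Finset (Fin n)).erase i, (f j)⁻¹
          ≤ ∏ _j ∈ (univ : Finset (Fin n)).erase i, (∑ k, (f k)⁻¹) :=
            Finset.prod_le_prod (fun j _ => hinv j)
              (fun j _ => Finset.single_le_sum (fun k _ => hinv k) (mem_univ j))
        _ = (∑ j, (f j)⁻¹) ^ (n - 1) := by
            rw [Finset.prod_const, Finset.card_erase_of_mem (mem_univ i), Finset.card_univ,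
              Fintype.card_fin]
    have h2 : f i = (∏ j, f j) * ∏ j ∈ (univ : Finset (Fin n)).erase i, (f j)⁻¹ := by
      rw [Finset.prod_inv_distrib, ← Finset.mul_prod_erase _ f (mem_univ i), mul_assoc,
        mul_inv_cancel₀ (Finset.prod_ne_zero_iff.2 fun j _ => (hf j).ne'), mul_one]
    rw [h2]
    exact mul_le_mul_of_nonneg_left h1 (Finset.prod_nonneg fun j _ => (hf j).le)
  calc ∑ i, f i ≤ ∑ _i : Fin n, (∏ j, f j) * (∑ j, (f j)⁻¹) ^ (n - 1) :=
        Finset.sum_le_sum fun i _ => hstep i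
    _ = (n : ℝ) * (∏ j, f j) * (∑ j, (f j)⁻¹) ^ (n - 1) := by
        rw [Finset.sum_const, Finset.card_univ, Fintype.card_fin, nsmul_eq_mul, mul_assoc]

lemma herm_trace {n : ℕ} {M : Matrix (Fin n) (Fin n) ℂ} (hM : M.IsHermitian) :
    M.trace = ∑ i, (hM.eigenvalues i : ℂ) := by
  conv_lhs => rw [hM.spectral_theorem, Unitary.conjStarAlgAut_apply]
  rw [Matrix.trace_mul_cycle, mem_unitaryGroup_iff'.mp hM.eigenvectorUnitary.2, one_mul,
    Matrix.trace_diagonal]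
  rfl

lemma herm_inv_eq {n : ℕ} {M : Matrix (Fin n) (Fin n) ℂ} (hM : M.IsHermitian)
    (hμ : ∀ i, hM.eigenvalues i ≠ 0) :
    M⁻¹ = (hM.eigenvectorUnitary : Matrix (Fin n) (Fin n) ℂ) *
      Matrix.diagonal ((fun i => ((hM.eigenvalues i : ℂ))⁻¹)) *
      star (hM.eigenvectorUnitary : Matrix (Fin n) (Fin n) ℂ) := by
  apply Matrix.inv_eq_right_inv
  calc M * ((hM.eigenvectorUnitary : Matrix (Fin n) (Fin n) ℂ) *
          Matrix.diagonal (fun i => ((hM.eigenvalues i : ℂ))⁻¹) *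
          star (hM.eigenvectorUnitary : Matrix (Fin n) (Fin n) ℂ))
      = (hM.eigenvectorUnitary : Matrix (Fin n) (Fin n) ℂ) *
        Matrix.diagonal (RCLike.ofReal ∘ hM.eigenvalues) *
        star (hM.eigenvectorUnitary : Matrix (Fin n) (Fin n) ℂ) *
        ((hM.eigenvectorUnitary : Matrix (Fin n) (Fin n) ℂ) *
          Matrix.diagonal (fun i => ((hM.eigenvalues i : ℂ))⁻¹) *
          star (hM.eigenvectorUnitary : Matrix (Fin n) (Fin n) ℂ)) := by
        have hs := hM.spectral_theorem
        rw [Unitary.conjStarAlgAut_apply] at hs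
        rw [← hs]
    _ = (hM.eigenvectorUnitary : Matrix (Fin n) (Fin n) ℂ) *
        (Matrix.diagonal (RCLike.ofReal ∘ hM.eigenvalues) *
          ((star (hM.eigenvectorUnitary : Matrix (Fin n) (Fin n) ℂ) *
            (hM.eigenvectorUnitary : Matrix (Fin n) (Fin n) ℂ)) *
          Matrix.diagonal (fun i => ((hM.eigenvalues i : ℂ))⁻¹))) *
        star (hM.eigenvectorUnitary : Matrix (Fin n) (Fin n) ℂ) := by
        simp only [Matrix.mul_assoc]
    _ = 1 := by
        rw [mem_unitaryGroup_iff'.mp hM.eigenvectorUnitary.2, one_mul,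
          Matrix.diagonal_mul_diagonal]
        have : (fun i => (RCLike.ofReal ∘ hM.eigenvalues) i * ((hM.eigenvalues i : ℂ))⁻¹)
            = fun _ => (1:ℂ) := by
          funext i
          simp only [Function.comp_apply]
          exact mul_inv_cancel₀ (Complex.ofReal_ne_zero.2 (hμ i))
        rw [this, Matrix.diagonal_one, mul_one,
          mem_unitaryGroup_iff.mp hM.eigenvectorUnitary.2]

lemma herm_inv_trace {n : ℕ} {M : Matrix (Fin n) (Fin n) ℂ} (hM : M.IsHermitian)
    (hμ : ∀ i, hM.eigenvalues i ≠ 0) :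
    M⁻¹.trace = ∑ i, ((hM.eigenvalues i : ℂ))⁻¹ := by
  rw [herm_inv_eq hM hμ, Matrix.trace_mul_cycle,
    mem_unitaryGroup_iff'.mp hM.eigenvectorUnitary.2, one_mul, Matrix.trace_diagonal]

/-- For positive definite Hermitian `n×n` matrices `A` and `B`,
`tr(A⁻¹B) ≤ n · (det B / det A) · (tr(B⁻¹A))^{n-1}`. -/
theorem trace_le_det_ratio_mul_trace_pow {n : ℕ} (A B : Matrix (Fin n) (Fin n) ℂ)
    (hA : A.PosDef) (hB : B.PosDef) :
    ((A⁻¹ * B).trace).re ≤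
      (n : ℝ) * (B.det.re / A.det.re) * (((B⁻¹ * A).trace).re) ^ (n - 1) := by
  classical
  set S := CFC.sqrt A with hSdef
  have hSps : S.PosSemidef := Matrix.nonneg_iff_posSemidef.mp (CFC.sqrt_nonneg A)
  have hSh : S.IsHermitian := hSps.isHermitian
  have hSS : S * S = A := CFC.sqrt_mul_sqrt_self A (Matrix.nonneg_iff_posSemidef.mpr hA.posSemidef)
  have hdetA : A.det ≠ 0 := hA.det_pos.ne'
  have hdetB : B.det ≠ 0 := hB.det_pos.ne'
  have hdetS : S.det ≠ 0 := by
    intro h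
    apply hdetA
    rw [← hSS, Matrix.det_mul, h, mul_zero]
  have hSinvh : S⁻¹.IsHermitian := hSh.inv
  set M := S⁻¹ * B * S⁻¹ with hMdef
  have hMps : M.PosSemidef := by
    have := hB.posSemidef.conjTranspose_mul_mul_same S⁻¹
    rwa [hSinvh.eq] at this
  have hMh : M.IsHermitian := hMps.isHermitian
  have hdetSi : S⁻¹.det ≠ 0 := by
    rw [Matrix.det_nonsing_inv, Ring.inverse_eq_inv']
    exact inv_ne_zero hdetS
  have hdetM : M.det ≠ 0 := by
    rw [hMdef, Matrix.det_mul, Matrix.det_mul]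
    exact mul_ne_zero (mul_ne_zero hdetSi hdetB) hdetSi
  -- eigenvalues of M are positive
  set μ := hMh.eigenvalues with hμdef
  have hμne : ∀ i, μ i ≠ 0 := by
    intro i hi
    apply hdetM
    rw [hMh.det_eq_prod_eigenvalues]
    exact Finset.prod_eq_zero (mem_univ i) (by simp [← hμdef, hi])
  have hμpos : ∀ i, 0 < μ i :=
    fun i => lt_of_le_of_ne (hMps.eigenvalues_nonneg i) (Ne.symm (hμne i))
  -- identity 1 : trace (A⁻¹ * B) = trace M
  have h1 : (A⁻¹ * B).trace = M.trace := by
    rw [← hSS, Matrix.mul_inv_rev, hMdef, Matrix.mul_assoc,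
      Matrix.trace_mul_comm]

  -- identity 2 : trace (B⁻¹ * A) = trace M⁻¹
  have hMinv : M⁻¹ = S * B⁻¹ * S := by
    rw [hMdef, Matrix.mul_inv_rev, Matrix.mul_inv_rev,
      Matrix.nonsing_inv_nonsing_inv S (isUnit_iff_ne_zero.2 hdetS), Matrix.mul_assoc]
  have h2 : (B⁻¹ * A).trace = M⁻¹.trace := by
    rw [hMinv, ← hSS, ← Matrix.mul_assoc, Matrix.trace_mul_cycle]
  -- identity 3 : det M = det B / det A
  have h3 : M.det = B.det / A.det := by
    rw [hMdef, Matrix.det_mul, Matrix.det_mul, Matrix.det_nonsing_inv,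
      Ring.inverse_eq_inv', ← hSS, Matrix.det_mul]
    field_simp
  -- real forms
  have htr1 : ((A⁻¹ * B).trace).re = ∑ i, μ i := by
    rw [h1, herm_trace hMh]
    simp [hμdef]
  have htr2 : ((B⁻¹ * A).trace).re = ∑ i, (μ i)⁻¹ := by
    rw [h2, herm_inv_trace hMh hμne]
    simp [hμdef]
  have hdet3 : B.det.re / A.det.re = ∏ i, μ i := by
    have hAim : A.det.im = 0 := by
      have := (Complex.lt_def.mp hA.det_pos).2
      simpa using this.symm
    have hBim : B.det.im = 0 := by
      have := (Complex.lt_def.mp hB.det_pos).2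
      simpa using this.symm
    have hAre : A.det = (A.det.re : ℂ) := Complex.ext rfl (by simp [hAim])
    have hBre : B.det = (B.det.re : ℂ) := Complex.ext rfl (by simp [hBim])
    have : (↑(B.det.re / A.det.re) : ℂ) = ((∏ i, μ i : ℝ) : ℂ) := by
      rw [Complex.ofReal_div, ← hAre, ← hBre, ← h3, hMh.det_eq_prod_eigenvalues]
      push_cast
      rfl
    exact_mod_cast this
  rw [htr1, htr2, hdet3]
  exact key_sum_le μ hμpos
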